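/- Let H > 0 and define λ₁ : {(ρ,q) ∈ ℝ² : ρ < 1} → ℝ by λ₁(ρ,q) = −Hq/(1−ρ) and r₁(ρ,q) = (1, −Hq/(1−ρ)). Then for every (ρ,q) with 0 ≤ ρ < 1, the function λ₁ is differentiable at (ρ,q) and its directional derivative in the direction r₁(ρ,q) equals Hq(H−1)/(1−ρ)². In particular this quantity vanishes for all (ρ,q) with q ≠ 0 if and only if H = 1, so for H = 1 the first characteristic field is linearly degenerate, while for H ≠ 1 it is genuinely nonlinear wherever q ≠ 0. -/

import Mathlib

/-- The first characteristic field λ₁(ρ,q) = -Hq/(1-ρ), r₁ = (1, -Hq/(1-ρ)):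
λ₁ is differentiable with ∇λ₁·r₁ = Hq(H-1)/(1-ρ)²; this vanishes for all q ≠ 0
iff H = 1 (linear degeneracy vs genuine nonlinearity). -/
theorem stmt1 (H : ℝ) (hH : 0 < H) :
    (∀ ρ q : ℝ, 0 ≤ ρ → ρ < 1 →
      DifferentiableAt ℝ (fun p : ℝ × ℝ => -H * p.2 / (1 - p.1)) (ρ, q) ∧
      fderiv ℝ (fun p : ℝ × ℝ => -H * p.2 / (1 - p.1)) (ρ, q) (1, -H * q / (1 - ρ)) =
        H * q * (H - 1) / (1 - ρ) ^ 2) ∧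
    ((∀ ρ q : ℝ, 0 ≤ ρ → ρ < 1 → q ≠ 0 → H * q * (H - 1) / (1 - ρ) ^ 2 = 0) ↔ H = 1) := by
  constructor
  · intro ρ q _ hρ1
    have hden : (1 : ℝ) - ρ ≠ 0 := by linarith
    have hg : HasFDerivAt (fun p : ℝ × ℝ => -H * p.2)
        (-(H • ContinuousLinearMap.snd ℝ ℝ ℝ)) (ρ, q) := by
      simpa [neg_smul] using (hasFDerivAt_snd (𝕜 := ℝ) (p := ((ρ, q) : ℝ × ℝ))).const_mul (-H)
    have hh : HasFDerivAt (fun p : ℝ × ℝ => 1 - p.1)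
        (-(ContinuousLinearMap.fst ℝ ℝ ℝ)) (ρ, q) := by
      simpa using (hasFDerivAt_const (1 : ℝ) ((ρ, q) : ℝ × ℝ)).fun_sub
        (hasFDerivAt_fst (𝕜 := ℝ) (p := ((ρ, q) : ℝ × ℝ)))
    have hinv : HasFDerivAt (fun p : ℝ × ℝ => (1 - p.1)⁻¹)
        ((-ContinuousLinearMap.mulLeftRight ℝ ℝ (1 - ρ)⁻¹ (1 - ρ)⁻¹).comp
          (-(ContinuousLinearMap.fst ℝ ℝ ℝ))) (ρ, q) :=
      (hasFDerivAt_inv' (𝕜 := ℝ) hden).comp (ρ, q) hh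
    have hf : HasFDerivAt (fun p : ℝ × ℝ => -H * p.2 / (1 - p.1))
        (-((H * q) • ((ContinuousLinearMap.mulLeftRight ℝ ℝ (1 - ρ)⁻¹ (1 - ρ)⁻¹).comp
          (ContinuousLinearMap.fst ℝ ℝ ℝ))) +
         (1 - ρ)⁻¹ • -(H • ContinuousLinearMap.snd ℝ ℝ ℝ)) (ρ, q) := by
      simpa [div_eq_mul_inv, neg_smul] using hg.fun_mul hinv
    refine ⟨hf.differentiableAt, ?_⟩
    rw [hf.fderiv]
    simp only [ContinuousLinearMap.add_apply, ContinuousLinearMap.smul_apply,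
      ContinuousLinearMap.comp_apply, ContinuousLinearMap.neg_apply,
      ContinuousLinearMap.mulLeftRight_apply, ContinuousLinearMap.coe_fst',
      ContinuousLinearMap.coe_snd', smul_eq_mul]
    field_simp
    ring
  · constructor
    · intro h
      have h1 := h 0 1 le_rfl one_pos one_ne_zero
      simp at h1
      rcases h1 with h1 | h1
      · exact absurd h1 (ne_of_gt hH)
      · linarith
    · intro h ρ q _ _ _
      rw [h]; ring
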